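/- Let (W,S) be an irreducible infinite right-angled Coxeter system, and suppose D_L(w) ⊆ D_R(v) for v,w ∈ W. If s_1,…,s_n is an enumeration of S \ D_R(v) and u = s_1 ⋯ s_n, then |vuw| = |v| + n + |w|. -/

import Mathlib

/-- The infinite dihedral group, realized as maps `x ↦ ε x + n` on `ℤ`. -/
structure DInf where
  eps : Bool
  t : ℤ
deriving DecidableEq

namespace DInf

instance : One DInf := ⟨⟨false, 0⟩⟩
instance : Mul DInf := ⟨fun f g => ⟨xor f.eps g.eps, f.t + (if f.eps then -g.t else g.t)⟩⟩
instance : Inv DInf := ⟨fun f => ⟨f.eps, if f.eps then f.t else -f.t⟩⟩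

@[simp] lemma one_eps : (1 : DInf).eps = false := rfl
@[simp] lemma one_t : (1 : DInf).t = 0 := rfl
@[simp] lemma mul_eps (f g : DInf) : (f * g).eps = xor f.eps g.eps := rfl
@[simp] lemma mul_t (f g : DInf) : (f * g).t = f.t + (if f.eps then -g.t else g.t) := rfl

lemma ext' {f g : DInf} (h1 : f.eps = g.eps) (h2 : f.t = g.t) : f = g := by
  cases f; cases g; simp_all

instance : Group DInf where
  mul_assoc f g h := by
    apply ext'
    · simp [Bool.xor_assoc]
    · rcases f with ⟨ef, nf⟩; rcases g with ⟨eg, ng⟩; rcases h with ⟨eh, nh⟩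
      cases ef <;> cases eg <;> cases eh <;> simp <;> ring
  one_mul f := by apply ext' <;> simp
  mul_one f := by apply ext' <;> simp
  inv_mul_cancel f := by
    have h1 : f⁻¹ = ⟨f.eps, if f.eps then f.t else -f.t⟩ := rfl
    apply ext' <;> rcases f with ⟨e, n⟩ <;> cases e <;> simp [h1]

/-- The reflection `x ↦ -x`. -/
def A : DInf := ⟨true, 0⟩
/-- The reflection `x ↦ 1 - x`. -/
def Bb : DInf := ⟨true, 1⟩

@[simp] lemma A_mul_A : A * A = 1 := rfl
@[simp] lemma Bb_mul_Bb : Bb * Bb = 1 := by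
  show (⟨xor true true, 1 + (if true then (-1 : ℤ) else 1)⟩ : DInf) = 1
  norm_num; rfl

lemma A_ne_one : A ≠ 1 := by decide
lemma A_ne_Bb : A ≠ Bb := by decide

/-- The canonical length of an element of `DInf`. -/
def lam (f : DInf) : ℕ := if f.eps then (2 * f.t - 1).natAbs else (2 * f.t).natAbs

@[simp] lemma lam_one : lam 1 = 0 := rfl

lemma lam_mul_le (g f : DInf) (hg : g = 1 ∨ g = A ∨ g = Bb) :
    lam (g * f) ≤ lam f + 1 := by
  rcases f with ⟨e, n⟩
  rcases hg with rfl | rfl | rfl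
  · cases e <;> simp [lam]
  · cases e <;> simp [lam, A, Mul.mul] <;> omega
  · cases e <;> simp [lam, Bb, Mul.mul] <;> omega

end DInf

set_option maxRecDepth 8000

namespace CoxeterAux

open CoxeterSystem List Function

open scoped Classical

variable {B : Type*} {W : Type*} [Group W] {M : CoxeterMatrix B} (cs : CoxeterSystem M W)

local prefix:100 "σ" => cs.simple
local prefix:100 "π" => cs.wordProd
local prefix:100 "ℓ" => cs.length

lemma sandwich_eq_iff {G : Type*} [Group G] {u : G} (hu : u * u = 1) (x y : G) :
    u * x * u = y ↔ x = u * y * u := by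
  have key : ∀ z : G, u * (u * z * u) * u = z := by
    intro z
    calc u * (u * z * u) * u = u * u * z * (u * u) := by simp [mul_assoc]
    _ = z := by rw [hu]; simp
  constructor
  · rintro rfl; exact (key x).symm
  · rintro rfl; exact key y

/-- The function underlying the reflection permutation representation. -/
noncomputable def permFn (i : B) : W × Bool → W × Bool :=
  fun p => (σ i * p.1 * σ i, if p.1 = σ i then !p.2 else p.2)

lemma permFn_involutive (i : B) : Function.Involutive (permFn cs i) := by
  rintro ⟨t, e⟩
  have h1 : σ i * (σ i * t * σ i) * σ i = t := by
    calc σ i * (σ i * t * σ i) * σ i = σ i * σ i * t * (σ i * σ i) := by simp [mul_assoc]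
    _ = t := by rw [cs.simple_mul_simple_self]; simp
  have h2 : (σ i * t * σ i = σ i) ↔ (t = σ i) := by
    rw [sandwich_eq_iff (cs.simple_mul_simple_self i)]
    rw [show σ i * σ i * σ i = σ i by rw [cs.simple_mul_simple_self]; simp]
  simp only [permFn, h1, h2]
  by_cases h : t = σ i <;> simp [h]

/-- The reflection permutation representation on generators. -/
noncomputable def perm (i : B) : Equiv.Perm (W × Bool) :=
  Function.Involutive.toPerm _ (permFn_involutive cs i)

lemma perm_apply (i : B) (p : W × Bool) : perm cs i p = permFn cs i p := rfl

lemma perm_liftable (rA : ∀ i j : B, i ≠ j → M i j = 2 ∨ M i j = 0) :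
    M.IsLiftable (perm cs) := by
  intro i j
  rcases eq_or_ne i j with rfl | hij
  · rw [M.diagonal, pow_one]
    refine Equiv.ext fun p => ?_
    simpa [Equiv.Perm.mul_apply, perm_apply] using permFn_involutive cs i p
  · rcases rA i j hij with h2 | h0
    · rw [h2]
      have hcomm : σ i * σ j = σ j * σ i := by
        have h := cs.simple_mul_simple_pow i j
        rw [h2, sq] at h
        have := eq_inv_of_mul_eq_one_left h
        rwa [mul_inv_rev, cs.inv_simple, cs.inv_simple] at this
      have hii := cs.simple_mul_simple_self i
      have hjj := cs.simple_mul_simple_self j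
      have haba : σ i * σ j * σ i = σ j := by
        rw [hcomm, mul_assoc, hii, mul_one]
      have hbab : σ j * σ i * σ j = σ i := by
        rw [← hcomm, mul_assoc, hjj, mul_one]
      have hC2 : ∀ t : W, (σ j * t * σ j = σ i) ↔ (t = σ i) := by
        intro t; rw [sandwich_eq_iff hjj, hbab]
      have hC3 : ∀ t : W, (σ i * (σ j * t * σ j) * σ i = σ j) ↔ (t = σ j) := by
        intro t
        rw [sandwich_eq_iff hii, haba, sandwich_eq_iff hjj,
          show σ j * σ j * σ j = σ j by rw [hjj, one_mul]]
      have hC4 : ∀ t : W, (σ j * (σ i * (σ j * t * σ j) * σ i) * σ j = σ i) ↔ (t = σ i) := by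
        intro t
        rw [sandwich_eq_iff hjj, hbab, sandwich_eq_iff hii,
          show σ i * σ i * σ i = σ i by rw [hii, one_mul], hC2]
      have hc : (σ i * σ j) * (σ i * σ j) = 1 := by
        have h := cs.simple_mul_simple_pow i j
        rwa [h2, sq] at h
      have hfirst : ∀ t : W, σ i * (σ j * (σ i * (σ j * t * σ j) * σ i) * σ j) * σ i = t := by
        intro t
        have k : ∀ x : W, σ i * (σ j * x * σ j) * σ i = (σ i * σ j) * x * (σ i * σ j)⁻¹ := by
          intro x
          rw [mul_inv_rev, cs.inv_simple, cs.inv_simple]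
          simp [mul_assoc]
        rw [k, k]
        calc (σ i * σ j) * ((σ i * σ j) * t * (σ i * σ j)⁻¹) * (σ i * σ j)⁻¹
            = ((σ i * σ j) * (σ i * σ j)) * t * (((σ i * σ j) * (σ i * σ j)))⁻¹ := by group
        _ = t := by rw [hc]; simp
      refine Equiv.ext fun p => ?_
      obtain ⟨t, e⟩ := p
      rw [sq]
      show (perm cs i) ((perm cs j) ((perm cs i) ((perm cs j) (t, e)))) = (t, e)
      simp only [perm_apply, permFn]
      simp only [hC2 t, hC3 t, hC4 t, hfirst t]
      by_cases h1 : t = σ j <;> by_cases h2 : t = σ i <;>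
        by_cases h3 : (σ i : W) = σ j <;> simp [h1, h2, h3, eq_comm]
    · rw [h0, pow_zero]


/-- The permutation representation as a monoid homomorphism. -/
noncomputable def permRep (rA : ∀ i j : B, i ≠ j → M i j = 2 ∨ M i j = 0) :
    W →* Equiv.Perm (W × Bool) := cs.lift ⟨perm cs, perm_liftable cs rA⟩

lemma permRep_simple (rA : ∀ i j : B, i ≠ j → M i j = 2 ∨ M i j = 0) (i : B) :
    permRep cs rA (σ i) = perm cs i := cs.lift_apply_simple _ i

lemma leftInvSeq_cons (i : B) (ω : List B) :
    cs.leftInvSeq (i :: ω) = σ i :: (cs.leftInvSeq ω).map (⇑(MulAut.conj (σ i))) := rfl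

lemma permRep_wordProd_inv (rA : ∀ i j : B, i ≠ j → M i j = 2 ∨ M i j = 0)
    (ω : List B) (t : W) (e : Bool) :
    permRep cs rA ((π ω)⁻¹) (t, e) =
      ((π ω)⁻¹ * t * π ω, if Odd ((cs.leftInvSeq ω).count t) then !e else e) := by
  induction ω generalizing t e with
  | nil => simp
  | cons i ω ih =>
    rw [cs.wordProd_cons, mul_inv_rev, map_mul, Equiv.Perm.mul_apply, cs.inv_simple,
      permRep_simple, perm_apply]
    show permRep cs rA ((π ω)⁻¹) (σ i * t * σ i, if t = σ i then !e else e) = _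
    rw [ih]
    have hcount : ((cs.leftInvSeq (i :: ω)).count t) =
        ((cs.leftInvSeq ω).count (σ i * t * σ i)) + (if t = σ i then 1 else 0) := by
      rw [leftInvSeq_cons, List.count_cons]
      congr 1
      · have ht : t = (MulAut.conj (σ i)) (σ i * t * σ i) := by
          simp only [MulAut.conj_apply, cs.inv_simple]
          calc t = σ i * σ i * t * (σ i * σ i) := by rw [cs.simple_mul_simple_self]; simp
          _ = σ i * (σ i * t * σ i) * σ i := by simp [mul_assoc]
        rw [show ((cs.leftInvSeq ω).map (⇑(MulAut.conj (σ i)))).count t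
            = ((cs.leftInvSeq ω).map (⇑(MulAut.conj (σ i)))).count
              ((MulAut.conj (σ i)) (σ i * t * σ i)) by rw [← ht]]
        exact List.count_map_of_injective _ _ (MulAut.conj (σ i)).injective _
      · rcases eq_or_ne t (σ i) with h | h
        · simp [h]
        · simp [h, Ne.symm h]
    simp only [Prod.mk.injEq]
    constructor
    · simp [mul_assoc]
    · rw [hcount]
      by_cases h : t = σ i
      · simp only [h, if_true, eq_self_iff_true]
        have hred : σ i * σ i * σ i = σ i := by rw [cs.simple_mul_simple_self, one_mul]
        rw [hred]
        rcases Nat.even_or_odd ((cs.leftInvSeq ω).count (σ i)) with hpar | hpar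
        · simp [Nat.not_odd_iff_even.mpr hpar, Even.add_one hpar]
        · simp [hpar, Nat.not_odd_iff_even.mpr (Odd.add_one hpar)]
      · simp [h]

lemma odd_count_iff_of_eq_wordProd (rA : ∀ i j : B, i ≠ j → M i j = 2 ∨ M i j = 0)
    {ω₁ ω₂ : List B} (h : π ω₁ = π ω₂) (t : W) :
    Odd ((cs.leftInvSeq ω₁).count t) ↔ Odd ((cs.leftInvSeq ω₂).count t) := by
  have h1 := permRep_wordProd_inv cs rA ω₁ t true
  have h2 := permRep_wordProd_inv cs rA ω₂ t true
  rw [h] at h1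
  rw [h1] at h2
  have hsnd := congrArg Prod.snd h2
  simp only at hsnd
  by_cases p1 : Odd ((cs.leftInvSeq ω₁).count t) <;>
    by_cases p2 : Odd ((cs.leftInvSeq ω₂).count t)
  · exact iff_of_true p1 p2
  · simp [p1, p2] at hsnd
  · simp [p1, p2] at hsnd
  · exact iff_of_false p1 p2

lemma simple_mem_leftInvSeq_of_isLeftDescent (rA : ∀ i j : B, i ≠ j → M i j = 2 ∨ M i j = 0)
    {ω : List B} (hred : cs.IsReduced ω) {i : B} (h : cs.IsLeftDescent (π ω) i) :
    σ i ∈ cs.leftInvSeq ω := by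
  obtain ⟨ω', hlen, hw'⟩ := cs.exists_reduced_word (σ i * π ω)
  have hπ : π (i :: ω') = π ω := by
    rw [cs.wordProd_cons, ← hw', cs.simple_mul_simple_cancel_left]
  have hred' : cs.IsReduced (i :: ω') := by
    show ℓ (π (i :: ω')) = (i :: ω').length
    rw [hπ, List.length_cons, ← (show ℓ (σ i * π ω) = ω'.length by rw [hw']; exact hlen)]
    have := cs.isLeftDescent_iff.mp h
    omega
  have hmem : σ i ∈ cs.leftInvSeq (i :: ω') := by
    rw [leftInvSeq_cons]; exact List.mem_cons_self
  have hodd : Odd ((cs.leftInvSeq (i :: ω')).count (σ i)) := by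
    rw [List.count_eq_one_of_mem (hred'.nodup_leftInvSeq) hmem]
    exact odd_one
  have := (odd_count_iff_of_eq_wordProd cs rA hπ (σ i)).mp hodd
  exact List.count_pos_iff.mp (Nat.pos_of_ne_zero (by rintro h0; rw [h0] at this; simp at this))

/-- The (left) exchange property. -/
lemma left_exchange (rA : ∀ i j : B, i ≠ j → M i j = 2 ∨ M i j = 0)
    {ω : List B} (hred : cs.IsReduced ω) {i : B} (h : cs.IsLeftDescent (π ω) i) :
    ∃ j < ω.length, σ i * π ω = π (ω.eraseIdx j) := by
  have hmem := simple_mem_leftInvSeq_of_isLeftDescent cs rA hred h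
  rw [List.mem_iff_getElem] at hmem
  obtain ⟨j, hj, hgetElem⟩ := hmem
  have hj' : j < ω.length := by simpa using hj
  refine ⟨j, hj', ?_⟩
  have : (cs.leftInvSeq ω).getD j 1 = σ i := by
    rw [List.getD_eq_getElem _ _ hj, hgetElem]
  rw [← this]
  exact cs.getD_leftInvSeq_mul_wordProd ω j



lemma commute_simples {a b : B} (h2 : M a b = 2) : σ a * σ b = σ b * σ a := by
  have h := cs.simple_mul_simple_pow a b
  rw [h2, sq] at h
  have := eq_inv_of_mul_eq_one_left h
  rwa [mul_inv_rev, cs.inv_simple, cs.inv_simple] at this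

/-- Homomorphism to `DInf` sending `σ a` to the reflection `A` and all other generators to `1`. -/
noncomputable def chi (rA : ∀ i j : B, i ≠ j → M i j = 2 ∨ M i j = 0) (a : B) : W →* DInf :=
  cs.lift ⟨fun i => if i = a then DInf.A else 1, by
    intro i j
    rcases eq_or_ne i j with rfl | hij
    · rw [M.diagonal, pow_one]
      dsimp only
      split_ifs <;> simp [DInf.A_mul_A]
    · rcases rA i j hij with h2 | h0
      · rw [h2]
        dsimp only
        split_ifs with hia hja hja
        · exact absurd (hia.trans hja.symm) hij
        · simp [sq, DInf.A_mul_A]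
        · simp [sq, DInf.A_mul_A]
        · simp
      · rw [h0, pow_zero]⟩

lemma chi_simple_self (rA : ∀ i j : B, i ≠ j → M i j = 2 ∨ M i j = 0) (a : B) :
    chi cs rA a (σ a) = DInf.A := by
  exact (cs.lift_apply_simple _ a).trans (by simp)

lemma chi_simple_ne (rA : ∀ i j : B, i ≠ j → M i j = 2 ∨ M i j = 0) {a b : B} (h : b ≠ a) :
    chi cs rA a (σ b) = 1 := by
  exact (cs.lift_apply_simple _ b).trans (by simp [h])

lemma simple_mul_simple_ne_one (rA : ∀ i j : B, i ≠ j → M i j = 2 ∨ M i j = 0) {a b : B}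
    (h : a ≠ b) : σ a * σ b ≠ 1 := by
  intro hcon
  have h2 := congrArg (chi cs rA a) hcon
  rw [map_mul, map_one, chi_simple_self, chi_simple_ne cs rA (Ne.symm h), mul_one] at h2
  exact DInf.A_ne_one h2

/-- Homomorphism to `DInf` sending `σ a`, `σ b` to the two standard reflections,
when `M a b = 0`. -/
noncomputable def psi (rA : ∀ i j : B, i ≠ j → M i j = 2 ∨ M i j = 0) {a b : B} (hab : a ≠ b)
    (h0 : M a b = 0) : W →* DInf :=
  cs.lift ⟨fun i => if i = a then DInf.A else if i = b then DInf.Bb else 1, by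
    intro i j
    rcases eq_or_ne i j with rfl | hij
    · rw [M.diagonal, pow_one]
      dsimp only
      split_ifs <;> simp [DInf.A_mul_A, DInf.Bb_mul_Bb]
    · rcases rA i j hij with h2 | hz
      · by_cases hia : i = a
        · by_cases hjb : j = b
          · exfalso
            rw [hia, hjb, h0] at h2; simp at h2
          · have hja : j ≠ a := fun h => hij (hia.trans h.symm)
            rw [h2]; dsimp only
            simp [hia, hja, hjb, sq, DInf.A_mul_A]
        · by_cases hib : i = b
          · by_cases hja : j = a
            · exfalso
              have hsym : M.M j i = M.M i j := M.isSymm.apply i j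
              rw [hib, hja, h0] at hsym
              rw [hib, hja, ← hsym] at h2; simp at h2
            · have hjb : j ≠ b := fun h => hij (hib.trans h.symm)
              rw [h2]; dsimp only
              simp [hia, hib, hja, hjb, sq, DInf.Bb_mul_Bb]
          · rw [h2]; dsimp only
            simp [hia, hib]
            split_ifs <;> simp [sq, DInf.A_mul_A, DInf.Bb_mul_Bb]
      · rw [hz, pow_zero]⟩

lemma psi_simple_a (rA : ∀ i j : B, i ≠ j → M i j = 2 ∨ M i j = 0) {a b : B} (hab : a ≠ b)
    (h0 : M a b = 0) : psi cs rA hab h0 (σ a) = DInf.A := by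
  exact (cs.lift_apply_simple _ a).trans (by simp)

lemma psi_simple_b (rA : ∀ i j : B, i ≠ j → M i j = 2 ∨ M i j = 0) {a b : B} (hab : a ≠ b)
    (h0 : M a b = 0) : psi cs rA hab h0 (σ b) = DInf.Bb := by
  exact (cs.lift_apply_simple _ b).trans (by simp [hab.symm])

lemma psi_simple_cases (rA : ∀ i j : B, i ≠ j → M i j = 2 ∨ M i j = 0) {a b : B} (hab : a ≠ b)
    (h0 : M a b = 0) (i : B) :
    psi cs rA hab h0 (σ i) = 1 ∨ psi cs rA hab h0 (σ i) = DInf.A ∨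
      psi cs rA hab h0 (σ i) = DInf.Bb := by
  by_cases hia : i = a
  · subst hia; exact Or.inr (Or.inl (psi_simple_a cs rA hab h0))
  by_cases hib : i = b
  · subst hib; exact Or.inr (Or.inr (psi_simple_b cs rA hab h0))
  left
  exact (cs.lift_apply_simple _ i).trans (by simp [hia, hib])

lemma lam_psi_word_le (rA : ∀ i j : B, i ≠ j → M i j = 2 ∨ M i j = 0) {a b : B} (hab : a ≠ b)
    (h0 : M a b = 0) (c : List B) :
    DInf.lam (psi cs rA hab h0 (π c)) ≤ c.length := by
  induction c with
  | nil => simp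
  | cons i c ih =>
    rw [cs.wordProd_cons, map_mul]
    calc DInf.lam (psi cs rA hab h0 (σ i) * psi cs rA hab h0 (π c))
        ≤ DInf.lam (psi cs rA hab h0 (π c)) + 1 :=
          DInf.lam_mul_le _ _ (psi_simple_cases cs rA hab h0 i)
    _ ≤ c.length + 1 := by omega
    _ = (i :: c).length := by simp

lemma trans_pow (n : ℕ) (k : ℤ) : (⟨false, k⟩ : DInf) ^ n = ⟨false, n * k⟩ := by
  induction n with
  | zero =>
    rw [pow_zero]
    refine DInf.ext' rfl ?_
    simp
  | succ n ih =>
    rw [pow_succ, ih]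
    refine DInf.ext' (by simp) ?_
    simp only [DInf.mul_t]
    norm_num
    ring

lemma lam_psi_alt (rA : ∀ i j : B, i ≠ j → M i j = 2 ∨ M i j = 0) {a b : B} (hab : a ≠ b)
    (h0 : M a b = 0) {x y : B} (hxy : (x = a ∧ y = b) ∨ (x = b ∧ y = a)) (m : ℕ) :
    DInf.lam (psi cs rA hab h0 (π (alternatingWord x y m))) = m := by
  have hAB : DInf.A * DInf.Bb = ⟨false, -1⟩ := by decide
  have hBA : DInf.Bb * DInf.A = ⟨false, 1⟩ := by decide
  rcases hxy with ⟨rfl, rfl⟩ | ⟨rfl, rfl⟩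
  · rw [cs.prod_alternatingWord_eq_mul_pow, map_mul, map_pow, map_mul,
      psi_simple_a cs rA hab h0, psi_simple_b cs rA hab h0, hAB, trans_pow]
    rcases Nat.even_or_odd m with hm | hm
    · have hm2 : m % 2 = 0 := Nat.even_iff.mp hm
      rw [if_pos hm, map_one, one_mul]
      simp only [DInf.lam]
      norm_num
      omega
    · have hm2 : m % 2 = 1 := Nat.odd_iff.mp hm
      rw [if_neg (by simpa using hm), psi_simple_b cs rA hab h0]
      have : DInf.Bb * (⟨false, (m / 2 : ℕ) * (-1)⟩ : DInf) = ⟨true, 1 + (m / 2 : ℕ)⟩ := by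
        refine DInf.ext' (by simp [DInf.Bb]) ?_
        simp [DInf.Bb]
      rw [this]
      simp only [DInf.lam]
      norm_num
      omega
  · rw [cs.prod_alternatingWord_eq_mul_pow, map_mul, map_pow, map_mul,
      psi_simple_a cs rA hab h0, psi_simple_b cs rA hab h0, hBA, trans_pow]
    rcases Nat.even_or_odd m with hm | hm
    · have hm2 : m % 2 = 0 := Nat.even_iff.mp hm
      rw [if_pos hm, map_one, one_mul]
      simp only [DInf.lam]
      norm_num
      omega
    · have hm2 : m % 2 = 1 := Nat.odd_iff.mp hm
      rw [if_neg (by simpa using hm), psi_simple_a cs rA hab h0]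
      have : DInf.A * (⟨false, ((m / 2 : ℕ) : ℤ) * 1⟩ : DInf) = ⟨true, -((m / 2 : ℕ) : ℤ)⟩ := by
        refine DInf.ext' (by simp [DInf.A]) ?_
        simp [DInf.A]
      rw [this]
      simp only [DInf.lam]
      norm_num
      omega

lemma mem_alternatingWord {x y i : B} (m : ℕ) (h : i ∈ alternatingWord x y m) :
    i = x ∨ i = y := by
  induction m with
  | zero => simp [alternatingWord] at h
  | succ m ih =>
    rw [alternatingWord_succ', List.mem_cons] at h
    rcases h with h | h
    · rcases Nat.even_or_odd m with he | ho
      · right; rwa [if_pos he] at h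
      · left; rwa [if_neg (by simpa using ho)] at h
    · exact ih h

lemma exists_alt_form {a b : B} (hab : a ≠ b) : ∀ (c : List B), (∀ i ∈ c, i = a ∨ i = b) →
    ∃ (m : ℕ) (x y : B), ((x = a ∧ y = b) ∨ (x = b ∧ y = a)) ∧
      π c = π (alternatingWord x y m) := by
  intro c hc
  induction c with
  | nil => exact ⟨0, a, b, Or.inl ⟨rfl, rfl⟩, by simp [alternatingWord]⟩
  | cons i c ih =>
    obtain ⟨m, x, y, hxy, hπ⟩ := ih (fun j hj => hc j (List.mem_cons_of_mem _ hj))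
    have hi := hc i (List.mem_cons_self)
    have hixy : i = x ∨ i = y := by
      rcases hxy with ⟨hx, hy⟩ | ⟨hx, hy⟩ <;> rcases hi with h | h
      · exact Or.inl (h.trans hx.symm)
      · exact Or.inr (h.trans hy.symm)
      · exact Or.inr (h.trans hy.symm)
      · exact Or.inl (h.trans hx.symm)
    by_cases hih : i = (if Even m then y else x)
    · refine ⟨m + 1, x, y, hxy, ?_⟩
      rw [cs.wordProd_cons, hπ, alternatingWord_succ', cs.wordProd_cons, ← hih]
    · cases m with
      | zero =>
        have h0' : alternatingWord x y 0 = [] := rfl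
        rcases hi with h | h
        · refine ⟨1, b, a, Or.inr ⟨rfl, rfl⟩, ?_⟩
          rw [cs.wordProd_cons, hπ, h0']
          have h1 : alternatingWord b a 1 = [a] := by
            rw [show (1 : ℕ) = 0 + 1 from rfl, alternatingWord_succ']
            simp [alternatingWord]
          rw [h1, h]
          simp
        · refine ⟨1, a, b, Or.inl ⟨rfl, rfl⟩, ?_⟩
          rw [cs.wordProd_cons, hπ, h0']
          have h1 : alternatingWord a b 1 = [b] := by
            rw [show (1 : ℕ) = 0 + 1 from rfl, alternatingWord_succ']
            simp [alternatingWord]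
          rw [h1, h]
          simp
      | succ m' =>
        refine ⟨m', x, y, hxy, ?_⟩
        have hih' : i = (if Even m' then y else x) := by
          rcases Nat.even_or_odd m' with he | ho
          · rw [if_pos he]
            rw [if_neg (by simp [Nat.even_add_one, he])] at hih
            tauto
          · rw [if_neg (by simpa using ho)]
            rw [if_pos (by simpa [Nat.even_add_one] using ho)] at hih
            tauto
        rw [cs.wordProd_cons, hπ, alternatingWord_succ', cs.wordProd_cons, ← hih',
          cs.simple_mul_simple_cancel_left]

lemma eraseIdx_append_left {α : Type*} (l1 l2 : List α) (j : ℕ) (h : j < l1.length) :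
    (l1 ++ l2).eraseIdx j = l1.eraseIdx j ++ l2 := by
  induction l1 generalizing j with
  | nil => simp at h
  | cons x l1 ih =>
    cases j with
    | zero => simp
    | succ j =>
      simp only [List.cons_append, List.eraseIdx_cons_succ, List.cons_append]
      rw [ih j (by simpa using h)]

lemma eraseIdx_append_right {α : Type*} (l1 l2 : List α) (j : ℕ) (h : l1.length ≤ j) :
    (l1 ++ l2).eraseIdx j = l1 ++ l2.eraseIdx (j - l1.length) := by
  induction l1 generalizing j with
  | nil => simp
  | cons x l1 ih =>
    cases j with
    | zero => simp at h
    | succ j =>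
      simp only [List.cons_append, List.eraseIdx_cons_succ, List.length_cons]
      rw [ih j (by simpa using h)]
      simp [Nat.succ_sub_succ]

lemma clique_left (rA : ∀ i j : B, i ≠ j → M i j = 2 ∨ M i j = 0) {a b : B} (hab : a ≠ b)
    {v : W} (ha : cs.IsLeftDescent v a) (hb : cs.IsLeftDescent v b) : M a b = 2 := by
  rcases rA a b hab with h2 | h0
  · exact h2
  exfalso
  have hex : ∃ n : ℕ, ∃ c : List B, (∀ i ∈ c, i = a ∨ i = b) ∧ ℓ (π c * v) = n :=
    ⟨ℓ v, [], by simp, by simp⟩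
  obtain ⟨c₀, hc₀, hlen₀⟩ := Nat.find_spec hex
  set n₀ := Nat.find hex with hn₀
  set d := π c₀ * v with hd
  have hmin : ∀ (c : List B), (∀ i ∈ c, i = a ∨ i = b) → n₀ ≤ ℓ (π c * v) := by
    intro c hc
    by_contra hlt
    push_neg at hlt
    exact Nat.find_min hex hlt ⟨c, hc, rfl⟩
  have claim : ∀ m : ℕ, ∀ x y : B, ((x = a ∧ y = b) ∨ (x = b ∧ y = a)) →
      ℓ (π (alternatingWord x y m) * d) = m + ℓ d := by
    intro m
    induction m with
    | zero =>
      intro x y _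
      have : alternatingWord x y 0 = [] := rfl
      rw [this]
      simp
    | succ m ih =>
      intro x y hxy
      have hu := ih x y hxy
      set u := π (alternatingWord x y m) * d with hudef
      set h := (if Even m then y else x) with hh
      have hha : h = a ∨ h = b := by
        rcases hxy with ⟨hx, hy⟩ | ⟨hx, hy⟩ <;> rw [hh] <;> split_ifs <;> tauto
      have hstep : π (alternatingWord x y (m + 1)) * d = σ h * u := by
        rw [alternatingWord_succ', cs.wordProd_cons, mul_assoc]
      rw [hstep]
      by_cases hdesc : cs.IsLeftDescent u h
      · exfalso
        obtain ⟨ρd, hρlen, hρd⟩ := cs.exists_reduced_word d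
        have hπu : π (alternatingWord x y m ++ ρd) = u := by
          rw [cs.wordProd_append, ← hρd]
        have hured : cs.IsReduced (alternatingWord x y m ++ ρd) := by
          show ℓ (π _) = _
          rw [hπu, hu, List.length_append, length_alternatingWord, (show ℓ d = ρd.length by rw [hρd]; exact hρlen)]
        obtain ⟨j, hj, hexch⟩ := left_exchange cs rA hured (by rwa [hπu])
        rw [List.length_append, length_alternatingWord] at hj
        rcases lt_or_ge j m with hjm | hjm
        · rw [eraseIdx_append_left _ _ j (by rwa [length_alternatingWord])] at hexch
          have hexch' : σ h * u = π ((alternatingWord x y m).eraseIdx j) * d := by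
            rw [← hπu, hexch, cs.wordProd_append, ← hρd]
          have hkey : π (alternatingWord x y (m + 1)) =
              π ((alternatingWord x y m).eraseIdx j) := by
            have h1 : π (alternatingWord x y (m + 1)) * d =
                π ((alternatingWord x y m).eraseIdx j) * d := by
              rw [hstep]; exact hexch'
            exact mul_right_cancel h1
          have l1 := lam_psi_alt cs rA hab h0 hxy (m + 1)
          rw [hkey] at l1
          have l2 := lam_psi_word_le cs rA hab h0 ((alternatingWord x y m).eraseIdx j)
          have l3 : ((alternatingWord x y m).eraseIdx j).length + 1 = m := by
            rw [List.length_eraseIdx_add_one (by rwa [length_alternatingWord]),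
              length_alternatingWord]
          omega
        · have hρpos : 0 < ρd.length := by omega
          rw [eraseIdx_append_right _ _ j (by rwa [length_alternatingWord]),
            length_alternatingWord] at hexch
          have hexch' : σ h * u = π (alternatingWord x y m) * π (ρd.eraseIdx (j - m)) := by
            rw [← hπu, hexch, cs.wordProd_append]
          set c' := (alternatingWord x y m).reverse ++ ([h] ++ (alternatingWord x y m ++ c₀))
              with hc'def
          have hc' : ∀ i ∈ c', i = a ∨ i = b := by
            intro i hi
            rw [hc'def] at hi
            simp only [List.mem_append, List.mem_reverse, List.mem_singleton] at hi
            rcases hi with hi | hi | hi | hi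
            · rcases mem_alternatingWord m hi with h' | h' <;>
                rcases hxy with ⟨hx, hy⟩ | ⟨hx, hy⟩ <;> subst h' <;> tauto
            · rw [hi]; exact hha
            · rcases mem_alternatingWord m hi with h' | h' <;>
                rcases hxy with ⟨hx, hy⟩ | ⟨hx, hy⟩ <;> subst h' <;> tauto
            · exact hc₀ i hi
          have heq : π c' * v = π (ρd.eraseIdx (j - m)) := by
            rw [hc'def, cs.wordProd_append, cs.wordProd_append, cs.wordProd_append,
              cs.wordProd_reverse, cs.wordProd_singleton]
            have : π (alternatingWord x y m) * π c₀ * v = u := by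
              rw [hudef, hd, mul_assoc]
            calc (π (alternatingWord x y m))⁻¹ * (σ h * (π (alternatingWord x y m) * π c₀)) * v
                = (π (alternatingWord x y m))⁻¹ * (σ h * u) := by
                  rw [← this]; simp [mul_assoc]
            _ = (π (alternatingWord x y m))⁻¹ *
                  (π (alternatingWord x y m) * π (ρd.eraseIdx (j - m))) := by rw [hexch']
            _ = π (ρd.eraseIdx (j - m)) := by simp [mul_assoc]
          have hlen' : ℓ (π c' * v) < ℓ d := by
            rw [heq]
            calc ℓ (π (ρd.eraseIdx (j - m))) ≤ (ρd.eraseIdx (j - m)).length :=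
              cs.length_wordProd_le _
            _ < ρd.length := by
                have := List.length_eraseIdx_add_one (l := ρd) (i := j - m) (by omega)
                omega
            _ = ℓ d := by rw [hρd]; exact hρlen.symm
          have hmm := hmin c' hc'
          have hge : ℓ d ≤ ℓ (π c' * v) := by rw [hlen₀]; exact hmm
          omega
      · rw [(cs.not_isLeftDescent_iff).mp hdesc, hu]
        omega
  have hv : v = π (c₀.reverse) * d := by
    rw [hd, cs.wordProd_reverse]
    group
  have hrevc₀ : ∀ i ∈ c₀.reverse, i = a ∨ i = b := by
    intro i hi
    exact hc₀ i (List.mem_reverse.mp hi)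
  obtain ⟨m, x, y, hxy, hπm⟩ := exists_alt_form cs hab c₀.reverse hrevc₀
  have hvd : v = π (alternatingWord x y m) * d := by rw [hv, hπm]
  have hlv : ℓ v = m + ℓ d := by rw [hvd]; exact claim m x y hxy
  set h := (if Even m then y else x) with hh
  have hha : cs.IsLeftDescent v h := by
    have : h = a ∨ h = b := by
      rcases hxy with ⟨hx, hy⟩ | ⟨hx, hy⟩ <;> rw [hh] <;> split_ifs <;> tauto
    rcases this with h' | h' <;> rw [h'] <;> assumption
  have hup : ℓ (σ h * v) = (m + 1) + ℓ d := by
    have : σ h * v = π (alternatingWord x y (m + 1)) * d := by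
      rw [hvd, alternatingWord_succ', cs.wordProd_cons, mul_assoc]
    rw [this]
    exact claim (m + 1) x y hxy
  have hlt : ℓ (σ h * v) < ℓ v := hha
  omega

lemma isLeftDescent_simple_mul_iff (rA : ∀ i j : B, i ≠ j → M i j = 2 ∨ M i j = 0) {x : W}
    {a : B} (hx : ¬ cs.IsLeftDescent x a) (b : B) :
    cs.IsLeftDescent (σ a * x) b ↔ (b = a ∨ (cs.IsLeftDescent x b ∧ M a b = 2)) := by
  have hxa : ℓ (σ a * x) = ℓ x + 1 := cs.not_isLeftDescent_iff.mp hx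
  constructor
  · intro hd
    by_cases hba : b = a
    · exact Or.inl hba
    right
    have ha' : cs.IsLeftDescent (σ a * x) a := by
      show ℓ (σ a * (σ a * x)) < ℓ (σ a * x)
      rw [cs.simple_mul_simple_cancel_left, hxa]
      omega
    have h2 : M a b = 2 := clique_left cs rA (fun h => hba h.symm) ha' hd
    refine ⟨?_, h2⟩
    by_contra hxb
    have hcomm := commute_simples cs h2
    have hxb' : ℓ (σ b * x) = ℓ x + 1 := cs.not_isLeftDescent_iff.mp hxb
    have hdlen : ℓ (σ b * (σ a * x)) < ℓ (σ a * x) := hd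
    have hdba : cs.IsLeftDescent (σ b * x) a := by
      show ℓ (σ a * (σ b * x)) < ℓ (σ b * x)
      have heq : σ a * (σ b * x) = σ b * (σ a * x) := by rw [← mul_assoc, hcomm, mul_assoc]
      rw [heq, hxb']
      omega
    obtain ⟨ρx, hρlen, hρx⟩ := cs.exists_reduced_word x
    have hπ : π (b :: ρx) = σ b * x := by rw [cs.wordProd_cons, ← hρx]
    have hredbx : cs.IsReduced (b :: ρx) := by
      show ℓ (π _) = _
      rw [hπ, hxb', List.length_cons, (show ℓ x = ρx.length by rw [hρx]; exact hρlen)]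
    obtain ⟨j, hj, hexch⟩ := left_exchange cs rA hredbx (by rwa [hπ])
    cases j with
    | zero =>
      rw [hπ, List.eraseIdx_cons_zero] at hexch
      have hxx : σ a * (σ b * x) = x := by rw [hexch, hρx]
      have h1 : σ a * σ b = 1 := by
        have := congrArg (fun z => z * x⁻¹) hxx
        simpa [mul_assoc] using this
      exact simple_mul_simple_ne_one cs rA (fun h => hba h.symm) h1
    | succ j =>
      rw [hπ, List.eraseIdx_cons_succ, cs.wordProd_cons] at hexch
      have h1 : σ a * x = π (ρx.eraseIdx j) := by
        have h2' : σ b * (σ a * x) = σ b * π (ρx.eraseIdx j) := by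
          rw [← mul_assoc, ← hcomm, mul_assoc]; exact hexch
        exact mul_left_cancel h2'
      have h3 : ℓ (σ a * x) ≤ ℓ x - 1 := by
        rw [h1]
        calc ℓ (π (ρx.eraseIdx j)) ≤ (ρx.eraseIdx j).length := cs.length_wordProd_le _
        _ ≤ ℓ x - 1 := by
            have hjlt : j < ρx.length := by simpa using hj
            have := List.length_eraseIdx_add_one hjlt
            have hρlen' : ℓ x = ρx.length := by rw [hρx]; exact hρlen
            omega
      omega
  · intro hcase
    rcases hcase with hba | ⟨hbx, h2⟩
    · rw [hba]
      show ℓ (σ a * (σ a * x)) < ℓ (σ a * x)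
      rw [cs.simple_mul_simple_cancel_left, hxa]
      omega
    · have hcomm := commute_simples cs h2
      show ℓ (σ b * (σ a * x)) < ℓ (σ a * x)
      have heq : σ b * (σ a * x) = σ a * (σ b * x) := by rw [← mul_assoc, ← hcomm, mul_assoc]
      have hb1 : ℓ (σ b * x) + 1 = ℓ x := cs.isLeftDescent_iff.mp hbx
      have hbnd : ℓ (σ a * (σ b * x)) ≤ ℓ (σ b * x) + 1 := by
        rcases cs.length_simple_mul (σ b * x) a with h' | h' <;> omega
      rw [heq, hxa]
      omega

lemma isRightDescent_mul_simple_iff (rA : ∀ i j : B, i ≠ j → M i j = 2 ∨ M i j = 0) {x : W}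
    {a : B} (hx : ¬ cs.IsRightDescent x a) (b : B) :
    cs.IsRightDescent (x * σ a) b ↔ (b = a ∨ (cs.IsRightDescent x b ∧ M a b = 2)) := by
  have hx' : ¬ cs.IsLeftDescent x⁻¹ a := fun h => hx (cs.isLeftDescent_inv_iff.mp h)
  have key : cs.IsRightDescent (x * σ a) b ↔ cs.IsLeftDescent (σ a * x⁻¹) b := by
    rw [← cs.isLeftDescent_inv_iff, mul_inv_rev, cs.inv_simple]
  rw [key, isLeftDescent_simple_mul_iff cs rA hx' b, cs.isLeftDescent_inv_iff]

lemma clique_right (rA : ∀ i j : B, i ≠ j → M i j = 2 ∨ M i j = 0) {a b : B} (hab : a ≠ b)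
    {v : W} (ha : cs.IsRightDescent v a) (hb : cs.IsRightDescent v b) : M a b = 2 :=
  clique_left cs rA hab (cs.isLeftDescent_inv_iff.mpr ha) (cs.isLeftDescent_inv_iff.mpr hb)

lemma prod_left (rA : ∀ i j : B, i ≠ j → M i j = 2 ∨ M i j = 0) :
    ∀ (ω : List B) (w : W), ω.Nodup → (∀ i ∈ ω, ¬ cs.IsLeftDescent w i) →
    ℓ (π ω * w) = ω.length + ℓ w ∧
      (∀ b, cs.IsLeftDescent (π ω * w) b →
        b ∈ ω ∨ (cs.IsLeftDescent w b ∧ ∀ j ∈ ω, M j b = 2)) := by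
  intro ω
  induction ω with
  | nil =>
    intro w _ _
    constructor
    · simp
    · intro b hb
      right
      refine ⟨by simpa using hb, by simp⟩
  | cons c l ih =>
    intro w hnd hnl
    have hndl : l.Nodup := (List.nodup_cons.mp hnd).2
    have hcl : c ∉ l := (List.nodup_cons.mp hnd).1
    obtain ⟨ih1, ih2⟩ := ih w hndl (fun i hi => hnl i (List.mem_cons_of_mem _ hi))
    have hnc : ¬ cs.IsLeftDescent (π l * w) c := by
      intro hdc
      rcases ih2 c hdc with hc | ⟨hcw, _⟩
      · exact hcl hc
      · exact hnl c (List.mem_cons_self) hcw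
    have hD := isLeftDescent_simple_mul_iff cs rA hnc
    constructor
    · rw [cs.wordProd_cons, mul_assoc, cs.not_isLeftDescent_iff.mp hnc, ih1]
      simp
      omega
    · intro b hb
      rw [cs.wordProd_cons, mul_assoc] at hb
      rcases (hD b).mp hb with hba | ⟨hdb, h2⟩
      · exact Or.inl (by rw [hba]; exact List.mem_cons_self)
      · rcases ih2 b hdb with hbl | ⟨hbw, hall⟩
        · exact Or.inl (List.mem_cons_of_mem _ hbl)
        · right
          refine ⟨hbw, ?_⟩
          intro j hj
          rcases List.mem_cons.mp hj with hjc | hjl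
          · rw [hjc]; exact h2
          · exact hall j hjl

lemma length_mul_of_descent_disjoint (rA : ∀ i j : B, i ≠ j → M i j = 2 ∨ M i j = 0) :
    ∀ (n : ℕ) (v z : W), ℓ z = n →
    (∀ i, cs.IsLeftDescent z i → ¬ cs.IsRightDescent v i) → ℓ (v * z) = ℓ v + ℓ z := by
  intro n
  induction n with
  | zero =>
    intro v z hz _
    rw [cs.length_eq_zero_iff.mp hz]
    simp
  | succ n ih =>
    intro v z hz hcond
    have hz1 : z ≠ 1 := by
      intro h
      rw [h] at hz
      simp at hz
    obtain ⟨i, hi⟩ := cs.exists_leftDescent_of_ne_one hz1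
    set z' := σ i * z with hz'def
    have hzz : z = σ i * z' := by rw [hz'def, cs.simple_mul_simple_cancel_left]
    have hz'len : ℓ z' = n := by
      have := cs.isLeftDescent_iff.mp hi
      rw [hz'def]
      omega
    have hvi : ¬ cs.IsRightDescent v i := hcond i hi
    have hvD := isRightDescent_mul_simple_iff cs rA hvi
    have hcond' : ∀ b, cs.IsLeftDescent z' b → ¬ cs.IsRightDescent (v * σ i) b := by
      intro b hbz' hbv
      rcases (hvD b).mp hbv with hbi | ⟨hbv', h2⟩
      · have hni : ¬ cs.IsLeftDescent z' i := by
          rw [hz'def]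
          exact cs.isLeftDescent_iff_not_isLeftDescent_mul.mp hi
        rw [hbi] at hbz'
        exact hni hbz'
      · have hcomm := commute_simples cs h2
        have hzb : cs.IsLeftDescent z b := by
          show ℓ (σ b * z) < ℓ z
          have hrw : σ b * z = σ i * (σ b * z') := by
            rw [hzz, ← mul_assoc, ← hcomm, mul_assoc]
          rw [hrw]
          have h1 : ℓ (σ b * z') < ℓ z' := hbz'
          have h3 : ℓ (σ i * (σ b * z')) ≤ ℓ (σ b * z') + 1 := by
            rcases cs.length_simple_mul (σ b * z') i with h' | h' <;> omega
          have hzlen : ℓ z = ℓ z' + 1 := by omega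
          omega
        exact hcond b hzb hbv'
    have hstep := ih (v * σ i) z' hz'len hcond'
    have hvσ : ℓ (v * σ i) = ℓ v + 1 := cs.not_isRightDescent_iff.mp hvi
    have hsplit : v * z = (v * σ i) * z' := by
      rw [hz'def, mul_assoc, cs.simple_mul_simple_cancel_left]
    rw [hsplit, hstep, hvσ, hz, hz'len]
    omega

end CoxeterAux

/-- Let `(W,S)` be an irreducible infinite right-angled Coxeter system, `v, w ∈ W` with
`D_L(w) ⊆ D_R(v)`. If `ω = [s_1, …, s_n]` is an enumeration (without repetition) of
`S \ D_R(v)` and `u = s_1 ⋯ s_n`, then `|v * u * w| = |v| + n + |w|`. -/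
theorem irreducible_infinite_right_angled_join_formula
    {B W : Type*} [Group W] (M : CoxeterMatrix B) (cs : CoxeterSystem M W)
    [Infinite W]
    (rightAngled : ∀ i j : B, i ≠ j → M i j = 2 ∨ M i j = 0)
    (irreducible : ∀ T : Set B, (∀ i ∈ T, ∀ j ∉ T, M i j = 2) → T = ∅ ∨ T = Set.univ)
    (v w : W)
    (hsub : {i : B | cs.IsLeftDescent w i} ⊆ {i : B | cs.IsRightDescent v i})
    (ω : List B) (hnodup : ω.Nodup)
    (henum : ∀ i : B, i ∈ ω ↔ ¬ cs.IsRightDescent v i) :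
    cs.length (v * cs.wordProd ω * w) = cs.length v + ω.length + cs.length w := by
  classical
  have hnl : ∀ i ∈ ω, ¬ cs.IsLeftDescent w i := fun i hi hL => (henum i).mp hi (hsub hL)
  obtain ⟨hA1, hA2⟩ := CoxeterAux.prod_left cs rightAngled ω w hnodup hnl
  have hcond : ∀ i, cs.IsLeftDescent (cs.wordProd ω * w) i → ¬ cs.IsRightDescent v i := by
    intro i hAi hvi
    rcases hA2 i hAi with hiω | ⟨hiw, hall⟩
    · exact (henum i).mp hiω hvi
    · have hTi : ∀ j, j ≠ i → M i j = 2 := by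
        intro j hji
        by_cases hjω : j ∈ ω
        · have h1 := hall j hjω
          have hsym : M.M i j = M.M j i := M.isSymm.apply j i
          rw [hsym]; exact h1
        · have hjv : cs.IsRightDescent v j := by
            by_contra hnj
            exact hjω ((henum j).mpr hnj)
          exact CoxeterAux.clique_right cs rightAngled (Ne.symm hji) hvi hjv
      rcases irreducible {i} (by
        intro i' hi' j hj
        rw [Set.mem_singleton_iff] at hi'
        subst hi'
        exact hTi j (by simpa using hj)) with hempty | huniv
      · have hmem : i ∈ ({i} : Set B) := rfl
        rw [hempty] at hmem
        exact hmem
      · have hall' : ∀ j : B, j = i := by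
          intro j
          have : j ∈ ({i} : Set B) := by rw [huniv]; trivial
          simpa using this
        have hsur : Function.Surjective (fun p : Bool => if p then cs.simple i else (1 : W)) := by
          intro x
          apply cs.simple_induction_left
            (p := fun x => ∃ p : Bool, (if p then cs.simple i else (1 : W)) = x)
          · exact ⟨false, rfl⟩
          · rintro u j ⟨p, hp⟩
            have hji : j = i := hall' j
            cases p
            · simp only [if_neg Bool.false_ne_true] at hp
              exact ⟨true, by simp [← hp, hji]⟩
            · simp only [if_pos rfl] at hp
              exact ⟨false, by simp [← hp, hji, cs.simple_mul_simple_self]⟩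
        have hfin : Finite W := Finite.of_surjective _ hsur
        exact hfin.not_infinite ‹Infinite W›
  have hB := CoxeterAux.length_mul_of_descent_disjoint cs rightAngled
    (cs.length (cs.wordProd ω * w)) v (cs.wordProd ω * w) rfl hcond
  rw [mul_assoc, hB, hA1]
  omega
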